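/- arXiv:1902.08149 — 2 statements merged into one kernel-verified Lean document; each statement's English description precedes it below -/
import Mathlib

section
/- There is no polynomially ambiguous weighted automaton B over the semiring (ℕ,+,×) in which every cycle has weight (product of its transition weights) equal to 1, such that the semantics of B on aⁿ equals the n-th Fibonacci number for all n: more precisely, if every cycle of B has weight 1 and B has ambiguity bounded by a polynomial of degree d, then its semantics on aⁿ is O(n^d), whereas Fₙ grows exponentially, a contradiction. -/
variable {Q Q' A R : Type*}

/-- `RunFrom Δ p w ρ`: `ρ` is the list of states visited after `p` along a run
reading `w` that starts in `p`. -/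
def RunFrom (Δ : Q → A → Q → Prop) : Q → List A → List Q → Prop
  | _, [], [] => True
  | p, a :: w, q :: ρ => Δ p a q ∧ RunFrom Δ q w ρ
  | _, _, _ => False

/-- There is a run from `p` to `q` reading `w`. -/
def HasRun (Δ : Q → A → Q → Prop) (p : Q) (w : List A) (q : Q) : Prop :=
  ∃ ρ, RunFrom Δ p w ρ ∧ (p :: ρ).getLast (List.cons_ne_nil _ _) = q

/-- `m`-fold power of a word. -/
def wpow (u : List A) (m : ℕ) : List A := (List.replicate m u).flatten

/-- Aperiodicity of a nondeterministic automaton. -/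
def Aperiodic (Δ : Q → A → Q → Prop) : Prop :=
  ∃ m, 1 ≤ m ∧ ∀ (p q : Q) (u : List A), u ≠ [] →
    (HasRun Δ p (wpow u m) q ↔ HasRun Δ p (wpow u (m + 1)) q)

/-- `p` and `q` are in the same strongly connected component. -/
def SameSCC (Δ : Q → A → Q → Prop) (p q : Q) : Prop :=
  p = q ∨ ((∃ u : List A, u ≠ [] ∧ HasRun Δ p u q) ∧ (∃ v : List A, v ≠ [] ∧ HasRun Δ q v p))

/-- The automaton is unambiguous from `p` to `q`. -/
def UnambFromTo (Δ : Q → A → Q → Prop) (p q : Q) : Prop :=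
  ∀ (u : List A) (ρ₁ ρ₂ : List Q), u ≠ [] →
    RunFrom Δ p u ρ₁ → RunFrom Δ p u ρ₂ →
    (p :: ρ₁).getLast (List.cons_ne_nil _ _) = q →
    (p :: ρ₂).getLast (List.cons_ne_nil _ _) = q → ρ₁ = ρ₂

def SCCUnambiguous (Δ : Q → A → Q → Prop) : Prop :=
  ∀ p q : Q, SameSCC Δ p q → UnambFromTo Δ p q

/-- The set of accepting runs on `w`, represented as pairs of an initial state and
the list of subsequently visited states. -/
def AccRuns (Δ : Q → A → Q → Prop) (I F : Set Q) (w : List A) : Set (Q × List Q) :=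
  {x | x.1 ∈ I ∧ RunFrom Δ x.1 w x.2 ∧ (x.1 :: x.2).getLast (List.cons_ne_nil _ _) ∈ F}

/-- The sequence of weights along a run. -/
def wgtSeq (wgt : Q → A → Q → R) : Q → List A → List Q → List R
  | p, a :: w, q :: ρ => wgt p a q :: wgtSeq wgt q w ρ
  | _, _, _ => []

/-! ### Auxiliary machinery -/

/-- Weight sequence of a run over the one-letter alphabet, as a function of states only. -/
def gseq (wgt : Q → Unit → Q → ℕ) : Q → List Q → List ℕ
  | _, [] => []
  | p, q :: ρ => wgt p () q :: gseq wgt q ρ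

lemma wgtSeq_eq_gseq (wgt : Q → Unit → Q → ℕ) (p : Q) (ρ : List Q) :
    wgtSeq wgt p (List.replicate ρ.length ()) ρ = gseq wgt p ρ := by
  induction ρ generalizing p with
  | nil => rfl
  | cons q ρ ih => simp [List.replicate_succ, wgtSeq, gseq, ih]

lemma runFrom_iff_chain (Δ : Q → Unit → Q → Prop) (p : Q) (ρ : List Q) :
    RunFrom Δ p (List.replicate ρ.length ()) ρ ↔ List.Chain (fun x y => Δ x () y) p ρ := by
  induction ρ generalizing p with
  | nil => simp [RunFrom, List.Chain]
  | cons q ρ ih => simp [List.replicate_succ, RunFrom, List.chain_cons, List.Chain, ih]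

lemma runFrom_length {A : Type*} (Δ : Q → A → Q → Prop) :
    ∀ (w : List A) (p : Q) (ρ : List Q), RunFrom Δ p w ρ → ρ.length = w.length := by
  intro w
  induction w with
  | nil => intro p ρ h; cases ρ with
    | nil => rfl
    | cons q ρ => exact absurd h (by simp [RunFrom])
  | cons a w ih => intro p ρ h; cases ρ with
    | nil => exact absurd h (by simp [RunFrom])
    | cons q ρ => obtain ⟨_, h2⟩ := h; simpa using ih q ρ h2

lemma gseq_append (wgt : Q → Unit → Q → ℕ) :
    ∀ (σ : List Q) (p : Q) (τ : List Q),
      gseq wgt p (σ ++ τ) = gseq wgt p σ ++ gseq wgt ((p :: σ).getLast (List.cons_ne_nil _ _)) τ := by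
  intro σ
  induction σ with
  | nil => intro p τ; simp [gseq]
  | cons q σ ih => intro p τ; simp [gseq, ih q τ, List.getLast_cons]

lemma getLast_congr {l₁ l₂ : List Q} (h₁ : l₁ ≠ []) (h₂ : l₂ ≠ []) (h : l₁ = l₂) :
    l₁.getLast h₁ = l₂.getLast h₂ := by subst h; rfl

lemma gseq_length (wgt : Q → Unit → Q → ℕ) :
    ∀ (ρ : List Q) (p : Q), (gseq wgt p ρ).length = ρ.length := by
  intro ρ
  induction ρ with
  | nil => intro p; rfl
  | cons q σ ih => intro p; simp [gseq, ih q]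

lemma gseq_mem (wgt : Q → Unit → Q → ℕ) :
    ∀ (ρ : List Q) (p : Q) (x : ℕ), x ∈ gseq wgt p ρ → ∃ a b, x = wgt a () b := by
  intro ρ
  induction ρ with
  | nil => intro p x h; simp [gseq] at h
  | cons q ρ ih =>
    intro p x h
    rcases (by simpa [gseq] using h : x = wgt p () q ∨ x ∈ gseq wgt q ρ) with h | h
    · exact ⟨p, q, h⟩
    · exact ih q x h

/-- Cycle removal: every run can be replaced by a loop-free run with the same endpoints
and the same weight, assuming all cycles have weight 1. -/
lemma cutRun (Δ' : Q → Q → Prop) (wgt : Q → Unit → Q → ℕ)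
    (hcyc : ∀ (r : Q) (ρ : List Q), ρ ≠ [] → List.Chain Δ' r ρ →
      (r :: ρ).getLast (List.cons_ne_nil _ _) = r → (gseq wgt r ρ).prod = 1) :
    ∀ (n : ℕ) (ρ : List Q) (p : Q), ρ.length ≤ n → List.Chain Δ' p ρ →
      ∃ ρ' : List Q, List.Chain Δ' p ρ' ∧
        (p :: ρ').getLast (List.cons_ne_nil _ _) = (p :: ρ).getLast (List.cons_ne_nil _ _) ∧
        (gseq wgt p ρ').prod = (gseq wgt p ρ).prod ∧ (p :: ρ').Nodup ∧ ∀ x ∈ ρ', x ∈ ρ := by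
  intro n
  induction n with
  | zero =>
    intro ρ p hlen _
    have : ρ = [] := List.eq_nil_of_length_eq_zero (Nat.le_zero.mp hlen)
    subst this
    exact ⟨[], List.Chain.nil, rfl, rfl, List.nodup_singleton p, by simp⟩
  | succ n ih =>
    intro ρ p hlen hch
    by_cases hp : p ∈ ρ
    · obtain ⟨σ, τ, rfl⟩ := List.append_of_mem hp
      have hsplit := List.isChain_cons_split.mp hch
      have h2 : (p :: (σ ++ [p])).getLast (List.cons_ne_nil _ _) = p := by
        rw [getLast_congr _ (by simp) (by simp : p :: (σ ++ [p]) = (p :: σ) ++ [p])]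
        exact List.getLast_concat
      have hcycle : (gseq wgt p (σ ++ [p])).prod = 1 := hcyc p (σ ++ [p]) (by simp) hsplit.1 h2
      have hprodeq : (gseq wgt p (σ ++ p :: τ)).prod = (gseq wgt p τ).prod := by
        have h1 : σ ++ p :: τ = (σ ++ [p]) ++ τ := by simp
        rw [h1, gseq_append, List.prod_append, h2, hcycle, one_mul]
      have hlasteq : (p :: (σ ++ p :: τ)).getLast (List.cons_ne_nil _ _) =
          (p :: τ).getLast (List.cons_ne_nil _ _) := by
        rw [getLast_congr _ (by simp) (by simp : p :: (σ ++ p :: τ) = (p :: σ) ++ p :: τ),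
          List.getLast_append]
        simp
      obtain ⟨ρ', h1, h2, h3, h4, h5⟩ := ih τ p (by simp at hlen; omega) hsplit.2
      exact ⟨ρ', h1, by rw [h2, hlasteq], by rw [h3, hprodeq], h4,
        fun x hx => by simp [h5 x hx]⟩
    · cases ρ with
      | nil => exact ⟨[], List.Chain.nil, rfl, rfl, List.nodup_singleton p, by simp⟩
      | cons q ρ₂ =>
        replace hch := List.chain_cons.mp hch
        obtain ⟨ρ₂', h1, h2, h3, h4, h5⟩ := ih ρ₂ q (by simp at hlen; omega) hch.2
        refine ⟨q :: ρ₂', List.chain_cons.mpr ⟨hch.1, h1⟩, ?_, ?_, ?_, ?_⟩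
        · rw [List.getLast_cons (List.cons_ne_nil _ _), List.getLast_cons (List.cons_ne_nil _ _)]
          exact h2
        · simp [gseq, h3]
        · refine List.nodup_cons.mpr ⟨?_, h4⟩
          intro hmem
          rcases List.mem_cons.mp hmem with h | h
          · exact hp (h ▸ List.mem_cons_self)
          · exact hp (List.mem_cons_of_mem _ (h5 _ h))
        · intro x hx
          rcases List.mem_cons.mp hx with h | h
          · simp [h]
          · exact List.mem_cons_of_mem _ (h5 _ h)

lemma fib_lower : ∀ k : ℕ, 2 ^ k ≤ Nat.fib (2 * k + 2) := by
  intro k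
  induction k with
  | zero => simp
  | succ k ih =>
    have h1 : 2 * (k + 1) + 2 = (2 * k + 2) + 2 := by ring
    rw [h1, Nat.fib_add_two, pow_succ]
    have h2 : Nat.fib (2 * k + 2) ≤ Nat.fib (2 * k + 2 + 1) := Nat.fib_le_fib_succ
    omega

lemma exists_pow_lt_two_pow (b d : ℕ) : ∃ k : ℕ, 1 ≤ k ∧ b * k ^ d < 2 ^ k := by
  have h := isLittleO_pow_const_const_pow_of_one_lt (R := ℝ) d (by norm_num : (1:ℝ) < 2)
  have h2 := h.def (by positivity : (0:ℝ) < 1 / (b + 1))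
  rw [Filter.eventually_atTop] at h2
  obtain ⟨N, hN⟩ := h2
  refine ⟨max N 1, le_max_right _ _, ?_⟩
  set k := max N 1 with hk
  have hNle := hN k (le_max_left _ _)
  rw [Real.norm_eq_abs, Real.norm_eq_abs, abs_of_nonneg (by positivity),
    abs_of_nonneg (by positivity)] at hNle
  have hk1 : (1:ℝ) ≤ (k:ℝ) ^ d := one_le_pow₀ (by exact_mod_cast le_max_right N 1)
  have hb : (0:ℝ) < (b:ℝ) + 1 := by positivity
  have hmul : ((b:ℝ) + 1) * ((k:ℝ) ^ d) ≤ 2 ^ k := by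
    rw [div_mul_eq_mul_div, one_mul] at hNle
    calc ((b:ℝ) + 1) * ((k:ℝ) ^ d) ≤ ((b:ℝ) + 1) * ((2:ℝ) ^ k / ((b:ℝ) + 1)) := by
          exact mul_le_mul_of_nonneg_left hNle (by positivity)
      _ = 2 ^ k := by field_simp
  have hlt : (b:ℝ) * (k:ℝ) ^ d < 2 ^ k := by nlinarith
  have : (b:ℝ) * (k:ℝ) ^ d < ((2:ℕ):ℝ) ^ k := by exact_mod_cast hlt
  exact_mod_cast this

lemma exists_fib_gt (a d : ℕ) : ∃ n : ℕ, n ≠ 0 ∧ a * n ^ d < Nat.fib n := by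
  obtain ⟨k, hk1, hk⟩ := exists_pow_lt_two_pow (a * 4 ^ d) d
  refine ⟨2 * k + 2, by omega, ?_⟩
  have h1 : (2 * k + 2) ^ d ≤ (4 * k) ^ d := Nat.pow_le_pow_left (by omega) d
  have h2 : a * (2 * k + 2) ^ d ≤ a * 4 ^ d * k ^ d := by
    calc a * (2 * k + 2) ^ d ≤ a * (4 * k) ^ d := Nat.mul_le_mul_left a h1
      _ = a * 4 ^ d * k ^ d := by rw [mul_pow]; ring
  calc a * (2 * k + 2) ^ d ≤ a * 4 ^ d * k ^ d := h2
    _ < 2 ^ k := hk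
    _ ≤ Nat.fib (2 * k + 2) := fib_lower k

/-- There is no weighted automaton over `(ℕ, +, ×)` in which every cycle has weight 1
and whose ambiguity is polynomially bounded, computing the Fibonacci numbers on the
one-letter alphabet. -/
theorem no_cycleWeightOne_polyAmbiguous_fibonacci {Q : Type*} [Fintype Q]
    (Δ : Q → Unit → Q → Prop) (wgt : Q → Unit → Q → ℕ) (I F : Set Q)
    (hcyc : ∀ (q : Q) (w : List Unit) (ρ : List Q), w ≠ [] →
      RunFrom Δ q w ρ → (q :: ρ).getLast (List.cons_ne_nil _ _) = q →
      (wgtSeq wgt q w ρ).prod = 1)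
    (hpoly : ∃ C d : ℕ, ∀ w : List Unit, w ≠ [] →
      (AccRuns Δ I F w).ncard ≤ C * w.length ^ d) :
    ¬ ∀ n : ℕ, (∑ᶠ x ∈ AccRuns Δ I F (List.replicate n ()),
        (wgtSeq wgt x.1 (List.replicate n ()) x.2).prod) = Nat.fib n := by
  classical
  intro hFib
  obtain ⟨C, d, hC⟩ := hpoly
  set Δ' : Q → Q → Prop := fun x y => Δ x () y with hΔ'
  set M := Finset.sup Finset.univ (fun pr : Q × Q => wgt pr.1 () pr.2) with hM
  set K := (M + 1) ^ Fintype.card Q with hK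
  -- translated cycle hypothesis
  have hcyc' : ∀ (r : Q) (ρ : List Q), ρ ≠ [] → List.Chain Δ' r ρ →
      (r :: ρ).getLast (List.cons_ne_nil _ _) = r → (gseq wgt r ρ).prod = 1 := by
    intro r ρ hne hch hlast
    have hw : (List.replicate ρ.length ()) ≠ ([] : List Unit) := by
      simp only [ne_eq, List.replicate_eq_nil_iff]
      exact fun h => hne (List.eq_nil_of_length_eq_zero h)
    have := hcyc r (List.replicate ρ.length ()) ρ hw
      ((runFrom_iff_chain Δ r ρ).mpr hch) hlast
    rwa [wgtSeq_eq_gseq] at this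
  -- every run has weight at most K
  have hbound : ∀ (p : Q) (ρ : List Q), List.Chain Δ' p ρ → (gseq wgt p ρ).prod ≤ K := by
    intro p ρ hch
    obtain ⟨ρ', h1, _, h3, h4, _⟩ := cutRun Δ' wgt hcyc' ρ.length ρ p le_rfl hch
    rw [← h3]
    have hmem : ∀ x ∈ gseq wgt p ρ', x ≤ M + 1 := by
      intro x hx
      obtain ⟨a, b, rfl⟩ := gseq_mem wgt ρ' p x hx
      exact le_trans (Finset.le_sup (f := fun pr : Q × Q => wgt pr.1 () pr.2)
        (Finset.mem_univ (a, b))) (Nat.le_succ M)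
    calc (gseq wgt p ρ').prod ≤ (M + 1) ^ (gseq wgt p ρ').length :=
          List.prod_le_pow_card _ _ hmem
      _ ≤ K := by
          apply Nat.pow_le_pow_right (Nat.succ_le_succ (Nat.zero_le M))
          rw [gseq_length]
          have := h4.length_le_card
          simp at this
          omega
  -- finiteness of the accepting-run sets
  have hfin : ∀ n : ℕ, (AccRuns Δ I F (List.replicate n ())).Finite := by
    intro n
    apply Set.Finite.subset (Set.Finite.prod Set.finite_univ (List.finite_length_eq Q n))
    rintro ⟨p, ρ⟩ ⟨_, hr, _⟩
    refine ⟨Set.mem_univ _, ?_⟩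
    have := runFrom_length Δ (List.replicate n ()) p ρ hr
    simpa using this
  -- the key polynomial bound on fib
  have key : ∀ n : ℕ, n ≠ 0 → Nat.fib n ≤ C * K * n ^ d := by
    intro n hn
    rw [← hFib n, finsum_mem_eq_finite_toFinset_sum _ (hfin n)]
    have hcard : ((hfin n).toFinset).card ≤ C * n ^ d := by
      rw [← Set.ncard_eq_toFinset_card _ (hfin n)]
      have := hC (List.replicate n ()) (by
        simp only [ne_eq, List.replicate_eq_nil_iff]; exact hn)
      simpa using this
    have hsum : ∑ x ∈ (hfin n).toFinset,
        (wgtSeq wgt x.1 (List.replicate n ()) x.2).prod ≤ ((hfin n).toFinset).card • K := by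
      apply Finset.sum_le_card_nsmul
      intro x hx
      rw [Set.Finite.mem_toFinset] at hx
      obtain ⟨_, hr, _⟩ := hx
      have hlen : x.2.length = n := by
        have := runFrom_length Δ (List.replicate n ()) x.1 x.2 hr
        simpa using this
      rw [← hlen] at hr ⊢
      rw [wgtSeq_eq_gseq]
      exact hbound x.1 x.2 ((runFrom_iff_chain Δ x.1 x.2).mp hr)
    calc ∑ x ∈ (hfin n).toFinset, (wgtSeq wgt x.1 (List.replicate n ()) x.2).prod
        ≤ ((hfin n).toFinset).card • K := hsum
      _ = ((hfin n).toFinset).card * K := smul_eq_mul _ _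
      _ ≤ (C * n ^ d) * K := Nat.mul_le_mul_right K hcard
      _ = C * K * n ^ d := by ring
  obtain ⟨n, hn, hlt⟩ := exists_fib_gt (C * K) d
  exact absurd (key n hn) (by omega)
end

section
/- Let Σ = {a,b} and consider the 2-ambiguous weighted automaton A over (ℕ,+,×) with two states, both initial and final, where state 1 has self-loops a with weight 2 and b with weight 1, and state 2 has self-loops a with weight 1 and b with weight 3. Then there is no unambiguous weighted automaton B over (ℕ,+,×) with ⟦B⟧(w) = 2^{|w|_a} + 3^{|w|_b} for all w ∈ Σ⁺. -/
variable {Q Q' A R : Type*}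

def endS (p : Q) (ρ : List Q) : Q := (p :: ρ).getLast (List.cons_ne_nil _ _)

lemma endS_nil (p : Q) : endS p [] = p := rfl

lemma endS_cons (p q : Q) (ρ : List Q) : endS p (q :: ρ) = endS q ρ := by
  simp only [endS]
  exact List.getLast_cons (List.cons_ne_nil _ _)

lemma endS_append (p : Q) (ρ σ : List Q) : endS p (ρ ++ σ) = endS (endS p ρ) σ := by
  induction ρ generalizing p with
  | nil => simp [endS_nil]
  | cons q ρ' ih => rw [List.cons_append, endS_cons, endS_cons, ih]

lemma RunFrom.length {Δ : Q → A → Q → Prop} :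
    ∀ {p : Q} {w : List A} {ρ : List Q}, RunFrom Δ p w ρ → ρ.length = w.length
  | _, [], [], _ => rfl
  | _, _ :: _, _ :: _, h => by simpa using RunFrom.length h.2
  | _, [], _ :: _, h => h.elim
  | _, _ :: _, [], h => h.elim

lemma RunFrom.append {Δ : Q → A → Q → Prop} :
    ∀ {p : Q} {u : List A} {ρ : List Q} {v : List A} {σ : List Q},
      RunFrom Δ p u ρ → RunFrom Δ (endS p ρ) v σ → RunFrom Δ p (u ++ v) (ρ ++ σ)
  | _, [], [], _, _, _, h2 => h2
  | _, [], _ :: _, _, _, h1, _ => h1.elim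
  | _, _ :: _, [], _, _, h1, _ => h1.elim
  | p, a :: u, q :: ρ, v, σ, h1, h2 =>
    ⟨h1.1, RunFrom.append h1.2 (by rwa [endS_cons] at h2)⟩

lemma RunFrom.split {Δ : Q → A → Q → Prop} :
    ∀ {p : Q} {u v : List A} {τ : List Q}, RunFrom Δ p (u ++ v) τ →
      ∃ ρ σ, τ = ρ ++ σ ∧ RunFrom Δ p u ρ ∧ RunFrom Δ (endS p ρ) v σ
  | p, [], v, τ, h => ⟨[], τ, rfl, trivial, h⟩
  | p, a :: u, v, q :: τ, h => by
    obtain ⟨ρ, σ, h1, h2, h3⟩ := RunFrom.split (Δ := Δ) h.2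
    exact ⟨q :: ρ, σ, by rw [h1, List.cons_append], ⟨h.1, h2⟩, by rwa [endS_cons]⟩
  | _, _ :: _, _, [], h => h.elim

lemma wgtSeq_append (wgt : Q → A → Q → R) :
    ∀ {p : Q} {u : List A} {ρ : List Q} (v : List A) (σ : List Q), ρ.length = u.length →
      wgtSeq wgt p (u ++ v) (ρ ++ σ) = wgtSeq wgt p u ρ ++ wgtSeq wgt (endS p ρ) v σ
  | p, [], [], v, σ, _ => by simp [wgtSeq, endS_nil]
  | p, a :: u, q :: ρ, v, σ, h => by
    rw [List.cons_append, List.cons_append, wgtSeq, wgtSeq, endS_cons,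
      wgtSeq_append wgt v σ (by simpa using h), List.cons_append]
  | _, [], _ :: _, _, _, h => by simp at h
  | _, _ :: _, [], _, _, h => by simp at h

lemma arith_contra (c x y : ℕ) (hy : 2 ≤ y) (hx : 4 * y ≤ x)
    (h : c * (x + 3) = x * y + 3) : False := by
  rcases lt_or_ge c y with h1 | h1
  · have h2 : (c + 1) * (x + 3) ≤ y * (x + 3) := Nat.mul_le_mul_right _ h1
    nlinarith
  · have h2 : y * (x + 3) ≤ c * (x + 3) := Nat.mul_le_mul_right _ h1
    nlinarith

lemma accRuns_finite {Q : Type} [Fintype Q] (Δ : Q → Bool → Q → Prop) (I F : Set Q)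
    (w : List Bool) : (AccRuns Δ I F w).Finite := by
  apply Set.Finite.subset ((Set.finite_univ (α := Q)).prod (List.finite_length_eq Q w.length))
  rintro ⟨p, ρ⟩ ⟨-, hrun, -⟩
  exact ⟨trivial, hrun.length⟩

lemma finsum_acc {Q : Type} [Fintype Q] {Δ : Q → Bool → Q → Prop} {I F : Set Q}
    {w : List Bool} (h1 : (AccRuns Δ I F w).ncard ≤ 1) {x : Q × List Q}
    (hx : x ∈ AccRuns Δ I F w) (f : Q × List Q → ℕ) :
    (∑ᶠ y ∈ AccRuns Δ I F w, f y) = f x := by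
  have hfin := accRuns_finite Δ I F w
  have hs : AccRuns Δ I F w = {x} := by
    refine Set.eq_singleton_iff_unique_mem.mpr ⟨hx, fun y hy => ?_⟩
    by_contra hne
    have := (Set.one_lt_ncard_iff hfin).mpr ⟨y, x, hy, hx, hne⟩
    omega
  rw [hs, finsum_mem_singleton]

/-- There is no unambiguous weighted automaton over the semiring `(ℕ, +, ×)` whose
semantics on a word `w ∈ {a,b}⁺` (with `a` encoded as `true` and `b` as `false`) is
`2^{|w|_a} + 3^{|w|_b}`. -/
theorem no_unambiguous_two_pow_add_three_pow :
    ¬ ∃ (Q : Type) (_ : Fintype Q) (Δ : Q → Bool → Q → Prop)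
        (wgt : Q → Bool → Q → ℕ) (I F : Set Q),
      (∀ w : List Bool, (AccRuns Δ I F w).ncard ≤ 1) ∧
      ∀ w : List Bool, w ≠ [] →
        (∑ᶠ x ∈ AccRuns Δ I F w, (wgtSeq wgt x.1 w x.2).prod)
          = 2 ^ w.count true + 3 ^ w.count false := by
  rintro ⟨Q, hQ, Δ, wgt, I, F, h1, h2⟩
  set n := Fintype.card Q with hn
  set N := n + 2 with hN
  set w0 : List Bool := List.replicate N true ++ [false] with hw0
  have hw0ne : w0 ≠ [] := by simp [hw0]
  have hsem0 := h2 w0 hw0ne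
  have hct : w0.count true = N := by simp [hw0]
  have hcf : w0.count false = 1 := by simp [hw0, List.count_replicate]
  rw [hct, hcf, pow_one] at hsem0
  -- extract the unique accepting run on w0
  obtain ⟨x, hx⟩ : (AccRuns Δ I F w0).Nonempty := by
    by_contra h
    rw [Set.not_nonempty_iff_eq_empty] at h
    rw [h, finsum_mem_empty] at hsem0
    exact (show (0:ℕ) < 2 ^ N + 3 by positivity).ne' hsem0.symm
  obtain ⟨p, τ⟩ := x
  obtain ⟨hpI, hrun, hfinal⟩ := hx
  have hw0base : (∑ᶠ y ∈ AccRuns Δ I F w0, (wgtSeq wgt y.1 w0 y.2).prod)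
      = (wgtSeq wgt p w0 τ).prod := finsum_acc (h1 w0) ⟨hpI, hrun, hfinal⟩ _
  -- split off the final b-step
  obtain ⟨ρ, σ, hτ0, hrunρ, hrunσ⟩ := RunFrom.split (u := List.replicate N true)
    (v := [false]) hrun
  have hτ : τ = ρ ++ σ := hτ0
  have hρlen : ρ.length = N := by simpa using hrunρ.length
  -- pigeonhole: a repeated state among the first n+1 states of the a-run
  obtain ⟨i, j, hij, heq⟩ : ∃ i j : Fin (n + 1), i < j ∧
      endS p (ρ.take i) = endS p (ρ.take j) := by
    obtain ⟨i, j, hne, heq⟩ := Fintype.exists_ne_map_eq_of_card_lt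
      (fun k : Fin (n + 1) => endS p (ρ.take k)) (by simp [hn])
    rcases lt_or_gt_of_ne hne with h | h
    exacts [⟨i, j, h, heq⟩, ⟨j, i, h, heq.symm⟩]
  set ii : ℕ := (i : ℕ) with hii
  set jj : ℕ := (j : ℕ) with hjj
  set m : ℕ := jj - ii with hm
  have hm1 : 1 ≤ m := by omega
  have hjn : jj ≤ n := by omega
  -- split the a-run: ρ = ρ1 ++ ρ2 ++ ρ3
  have hrep1 : List.replicate N (true : Bool)
      = List.replicate ii true ++ List.replicate (N - ii) true := by
    rw [← List.replicate_add]; congr 1; omega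
  rw [hrep1] at hrunρ
  obtain ⟨ρ1, ρr, hρsplit, hrun1, hrunr⟩ := RunFrom.split hrunρ
  have hρ1len : ρ1.length = ii := by simpa using hrun1.length
  have hrep2 : List.replicate (N - ii) (true : Bool)
      = List.replicate m true ++ List.replicate (N - jj) true := by
    rw [← List.replicate_add]; congr 1; omega
  rw [hrep2] at hrunr
  obtain ⟨ρ2, ρ3, hρrsplit, hrun2, hrun3⟩ := RunFrom.split hrunr
  have hρ2len : ρ2.length = m := by simpa using hrun2.length
  set q : Q := endS p ρ1 with hq
  -- the loop: endS q ρ2 = q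
  have hρtake_i : ρ.take ii = ρ1 := by
    rw [hρsplit]; exact List.take_left' hρ1len
  have hρtake_j : ρ.take jj = ρ1 ++ ρ2 := by
    rw [hρsplit, hρrsplit, ← List.append_assoc]
    exact List.take_left' (by rw [List.length_append, hρ1len, hρ2len]; omega)
  have hloop : endS q ρ2 = q := by
    rw [hq, ← endS_append, ← hρtake_j, ← heq, hρtake_i]
  -- end of the a-part
  have hendρ : endS p ρ = endS q ρ3 := by
    rw [hρsplit, hρrsplit, endS_append, endS_append, ← hq, hloop]
  -- the pumped run
  set ρ' : List Q := ρ1 ++ (ρ2 ++ (ρ2 ++ (ρ3 ++ σ))) with hρ'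
  set w1 : List Bool := List.replicate (N + m) true ++ [false] with hw1
  have hw1eq : w1 = List.replicate ii true ++ (List.replicate m true
      ++ (List.replicate m true ++ (List.replicate (N - jj) true ++ [false]))) := by
    rw [hw1, ← List.append_assoc, ← List.append_assoc, ← List.append_assoc,
      ← List.replicate_add, ← List.replicate_add, ← List.replicate_add]
    congr 2; omega
  rw [hloop] at hrun3
  have hrunσ' : RunFrom Δ (endS q ρ3) [false] σ := hendρ ▸ hrunσ
  have hrun3σ : RunFrom Δ q (List.replicate (N - jj) true ++ [false]) (ρ3 ++ σ) :=
    hrun3.append hrunσ'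
  have hrun2' : RunFrom Δ q (List.replicate m true ++ (List.replicate (N - jj) true
      ++ [false])) (ρ2 ++ (ρ3 ++ σ)) := hrun2.append (by rw [hloop]; exact hrun3σ)
  have hrun2'' : RunFrom Δ q (List.replicate m true ++ (List.replicate m true
      ++ (List.replicate (N - jj) true ++ [false]))) (ρ2 ++ (ρ2 ++ (ρ3 ++ σ))) :=
    hrun2.append (by rw [hloop]; exact hrun2')
  have hrun' : RunFrom Δ p w1 ρ' := by
    rw [hw1eq, hρ']
    exact hrun1.append hrun2''
  -- the pumped run is accepting
  have hend' : endS p ρ' = endS p τ := by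
    rw [hρ', hτ, hρsplit, hρrsplit]
    simp only [endS_append, ← hq, hloop]
  have hx' : (p, ρ') ∈ AccRuns Δ I F w1 := ⟨hpI, hrun', by
    show endS p ρ' ∈ F; rw [hend']; exact hfinal⟩
  have hw1ne : w1 ≠ [] := by simp [hw1]
  have hsem1 := h2 w1 hw1ne
  have hct1 : w1.count true = N + m := by simp [hw1]
  have hcf1 : w1.count false = 1 := by simp [hw1, List.count_replicate]
  rw [hct1, hcf1, pow_one] at hsem1
  rw [finsum_acc (h1 w1) hx' _] at hsem1
  rw [hw0base] at hsem0
  -- compute the weights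
  set c : ℕ := (wgtSeq wgt q (List.replicate m true) ρ2).prod with hc
  set wa : ℕ := (wgtSeq wgt p (List.replicate ii true) ρ1).prod with hwa
  set wb : ℕ := (wgtSeq wgt q (List.replicate (N - jj) true ++ [false]) (ρ3 ++ σ)).prod
    with hwb
  have hbaseW : (wgtSeq wgt p w0 τ).prod = wa * (c * wb) := by
    have e0 : w0 = List.replicate ii true ++ (List.replicate m true
        ++ (List.replicate (N - jj) true ++ [false])) := by
      rw [hw0, ← List.append_assoc, ← List.append_assoc, ← List.replicate_add,
        ← List.replicate_add]
      congr 2; omega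
    rw [e0, hτ, hρsplit, hρrsplit, List.append_assoc, List.append_assoc,
      wgtSeq_append wgt _ _ (by simp [hρ1len]), ← hq,
      wgtSeq_append wgt _ _ (by simp [hρ2len]), hloop]
    simp [mul_assoc]
    rfl
  have hpumpW : (wgtSeq wgt p w1 ρ').prod = wa * (c * (c * wb)) := by
    rw [hw1eq, hρ',
      wgtSeq_append wgt _ _ (by simp [hρ1len]), ← hq,
      wgtSeq_append wgt _ _ (by simp [hρ2len]), hloop,
      wgtSeq_append wgt _ _ (by simp [hρ2len]), hloop]
    simp [mul_assoc]
    rfl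
  rw [hbaseW] at hsem0
  rw [hpumpW] at hsem1
  -- the key equation
  have hkey : c * (2 ^ N + 3) = 2 ^ N * 2 ^ m + 3 := by
    rw [pow_add] at hsem1
    rw [← hsem0, ← hsem1]; ring
  exact arith_contra c (2 ^ N) (2 ^ m) (by
      calc (2:ℕ) = 2 ^ 1 := rfl
      _ ≤ 2 ^ m := Nat.pow_le_pow_right (by norm_num) hm1)
    (by
      calc 4 * 2 ^ m = 2 ^ (m + 2) := by ring
      _ ≤ 2 ^ N := Nat.pow_le_pow_right (by norm_num) (by omega))
    hkey
end
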